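/- For every integer n > 1, Φ(n) < 6n·n^{1/3}, where Φ(n) := max{m : φ(m) divides 2n}. -/

import Mathlib

/-- `Φ(n)` is the largest positive integer `m` such that `φ(m)` divides `2n`. -/
noncomputable def Phi (n : ℕ) : ℕ := sSup {m : ℕ | 0 < m ∧ Nat.totient m ∣ 2 * n}


lemma pp5 (p k : ℕ) (hp : p.Prime) (hp5 : 5 ≤ p) (hk : 0 < k) :
    (p ^ k) ^ 3 < Nat.totient (p ^ k) ^ 4 := by
  obtain ⟨k, rfl⟩ := Nat.exists_eq_succ_of_ne_zero hk.ne'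
  rw [Nat.totient_prime_pow_succ hp]
  have h1 : p ^ 3 < (p - 1) ^ 4 := by
    obtain ⟨q, rfl⟩ : ∃ q, p = q + 1 := ⟨p - 1, by omega⟩
    have hq : 4 ≤ q := by omega
    simp only [Nat.add_sub_cancel]
    nlinarith [sq_nonneg q, sq_nonneg (q-4), pow_pos (show 0<q by omega) 3, Nat.pow_le_pow_left hq 3]
  calc (p ^ (k+1)) ^ 3 = p ^ (3*k) * p ^ 3 := by ring
    _ ≤ p ^ (4*k) * p ^ 3 := by gcongr <;> [exact hp.one_lt.le; omega]
    _ < p ^ (4*k) * (p-1)^4 :=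
        Nat.mul_lt_mul_of_le_of_lt (le_refl _) h1 (pow_pos hp.pos _)
    _ = (p ^ k * (p - 1)) ^ 4 := by ring

lemma cop6 : ∀ r : ℕ, Nat.Coprime r 6 →
    r ^ 3 ≤ Nat.totient r ^ 4 ∧ (r ≠ 1 → r ^ 3 < Nat.totient r ^ 4) := by
  intro r
  induction r using Nat.recOnPrimePow with
  | zero => intro h; simp [Nat.Coprime] at h
  | one => intro _; simp
  | prime_pow_mul a p n hp hpa hn ih =>
    intro hcop
    have hpdvd : p ∣ p ^ n * a := Dvd.dvd.mul_right (dvd_pow_self p hn.ne') a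
    have hcp : Nat.Coprime p 6 := Nat.Coprime.coprime_dvd_left hpdvd hcop
    have hca : Nat.Coprime a 6 := Nat.Coprime.coprime_dvd_left (dvd_mul_left a _) hcop
    have hp5 : 5 ≤ p := by
      rcases Nat.lt_or_ge p 5 with h | h
      · interval_cases p <;> first | (exfalso; revert hcp; decide) | (exact absurd hp (by decide))
      · exact h
    have ha0 : 0 < a := by
      rcases Nat.eq_zero_or_pos a with rfl | h
      · simp [Nat.Coprime] at hca
      · exact h
    have hcpa : Nat.Coprime (p ^ n) a := Nat.Coprime.pow_left _ ((Nat.Prime.coprime_iff_not_dvd hp).2 hpa)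
    have htm : Nat.totient (p ^ n * a) = Nat.totient (p ^ n) * Nat.totient a :=
      Nat.totient_mul hcpa
    have key : (p ^ n * a) ^ 3 < Nat.totient (p ^ n * a) ^ 4 := by
      rw [htm, mul_pow, mul_pow]
      exact Nat.mul_lt_mul_of_lt_of_le (pp5 p n hp hp5 hn) (ih hca).1
        (pow_pos (Nat.totient_pos.2 ha0) 4)
    exact ⟨key.le, fun _ => key⟩

lemma two_part (a : ℕ) : 2 ^ (3*a) ≤ 8 * Nat.totient (2 ^ a) ^ 4 ∧
    (a ≠ 1 → 2 ^ (3*a) < 8 * Nat.totient (2 ^ a) ^ 4) := by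
  cases a with
  | zero => simp
  | succ k =>
    rw [Nat.totient_prime_pow_succ Nat.prime_two]
    have h : 8 * (2 ^ k * (2-1)) ^ 4 = 2 ^ (4*k+3) := by
      rw [show (2:ℕ)-1 = 1 from rfl, mul_one, ← pow_mul, pow_add, Nat.mul_comm k 4]
      generalize (2:ℕ)^(4*k) = X; ring
    rw [h]
    exact ⟨Nat.pow_le_pow_right (by norm_num) (by omega),
      fun hk => Nat.pow_lt_pow_right (by norm_num) (by omega)⟩

lemma three_part (b : ℕ) : 16 * 3 ^ (3*b) ≤ 27 * Nat.totient (3 ^ b) ^ 4 ∧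
    (b ≠ 1 → 16 * 3 ^ (3*b) < 27 * Nat.totient (3 ^ b) ^ 4) := by
  cases b with
  | zero => norm_num
  | succ k =>
    rw [Nat.totient_prime_pow_succ Nat.prime_three]
    have h : 27 * (3 ^ k * (3-1)) ^ 4 = 16 * 3 ^ (4*k+3) := by
      rw [show (3:ℕ)-1 = 2 from rfl, mul_pow, ← pow_mul, pow_add, Nat.mul_comm k 4]
      generalize (3:ℕ)^(4*k) = X; ring
    rw [h]
    exact ⟨Nat.mul_le_mul_left _ (Nat.pow_le_pow_right (by norm_num) (by omega)),
      fun hk => Nat.mul_lt_mul_of_le_of_lt (le_refl 16)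
        (Nat.pow_lt_pow_right (by norm_num) (by omega)) (by norm_num)⟩

lemma key_ineq (m : ℕ) (hm : 0 < m) :
    2 * m ^ 3 ≤ 27 * Nat.totient m ^ 4 ∧
    (m ≠ 6 → 2 * m ^ 3 < 27 * Nat.totient m ^ 4) := by
  set a := m.factorization 2 with ha
  set m1 := m / 2 ^ a with hm1
  have hsplit1 : 2 ^ a * m1 = m := Nat.ordProj_mul_ordCompl_eq_self m 2
  have hm1pos : 0 < m1 := Nat.ordCompl_pos 2 hm.ne'
  have h2m1 : ¬ 2 ∣ m1 := Nat.not_dvd_ordCompl Nat.prime_two hm.ne'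
  set b := m1.factorization 3 with hb
  set r := m1 / 3 ^ b with hr
  have hsplit2 : 3 ^ b * r = m1 := Nat.ordProj_mul_ordCompl_eq_self m1 3
  have hrpos : 0 < r := Nat.ordCompl_pos 3 hm1pos.ne'
  have h3r : ¬ 3 ∣ r := Nat.not_dvd_ordCompl Nat.prime_three hm1pos.ne'
  have h2r : ¬ 2 ∣ r := fun h => h2m1 (h.trans ⟨3 ^ b, by rw [← hsplit2]; ring⟩)
  have hcr6 : Nat.Coprime r 6 := by
    rw [show (6:ℕ) = 2 * 3 from rfl]
    exact Nat.Coprime.mul_right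
      ((Nat.coprime_comm).1 ((Nat.Prime.coprime_iff_not_dvd Nat.prime_two).2 h2r))
      ((Nat.coprime_comm).1 ((Nat.Prime.coprime_iff_not_dvd Nat.prime_three).2 h3r))
  have hc3r : Nat.Coprime (3 ^ b) r :=
    Nat.Coprime.pow_left _ ((Nat.Prime.coprime_iff_not_dvd Nat.prime_three).2 h3r)
  have hc2m1 : Nat.Coprime (2 ^ a) m1 :=
    Nat.Coprime.pow_left _ ((Nat.Prime.coprime_iff_not_dvd Nat.prime_two).2 h2m1)
  have htot : Nat.totient m = Nat.totient (2 ^ a) * (Nat.totient (3 ^ b) * Nat.totient r) := by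
    rw [← hsplit1, Nat.totient_mul hc2m1, ← hsplit2, Nat.totient_mul hc3r]
  set A := Nat.totient (2 ^ a)
  set B := Nat.totient (3 ^ b)
  set R := Nat.totient r
  have hApos : 0 < A := Nat.totient_pos.2 (pow_pos (by norm_num) a)
  have hBpos : 0 < B := Nat.totient_pos.2 (pow_pos (by norm_num) b)
  have hRpos : 0 < R := Nat.totient_pos.2 hrpos
  have hA := two_part a
  have hB := three_part b
  have hR := cop6 r hcr6
  have h16 : ∀ X Y : ℕ, 16 * X ≤ 216 * Y → 2 * X ≤ 27 * Y := fun X Y h => by omega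
  have h16' : ∀ X Y : ℕ, 16 * X < 216 * Y → 2 * X < 27 * Y := fun X Y h => by omega
  have hform : 16 * m ^ 3 = 2 ^ (3*a) * ((16 * 3 ^ (3*b)) * r ^ 3) := by
    rw [← hsplit1, ← hsplit2]; ring
  have hform2 : 216 * Nat.totient m ^ 4 = (8 * A ^ 4) * ((27 * B ^ 4) * R ^ 4) := by
    rw [htot]; ring
  constructor
  · apply h16
    rw [hform, hform2]
    exact Nat.mul_le_mul hA.1 (Nat.mul_le_mul hB.1 hR.1)
  · intro hm6
    apply h16'
    rw [hform, hform2]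
    have hcases : a ≠ 1 ∨ b ≠ 1 ∨ r ≠ 1 := by
      by_contra h
      push_neg at h
      obtain ⟨h1, h2, h3⟩ := h
      exact hm6 (by rw [← hsplit1, ← hsplit2, h1, h2, h3]; norm_num)
    rcases hcases with h | h | h
    · exact Nat.mul_lt_mul_of_lt_of_le (hA.2 h) (Nat.mul_le_mul hB.1 hR.1) (by positivity)
    · exact Nat.mul_lt_mul_of_le_of_lt hA.1
        (Nat.mul_lt_mul_of_lt_of_le (hB.2 h) hR.1 (by positivity)) (by positivity)
    · exact Nat.mul_lt_mul_of_le_of_lt hA.1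
        (Nat.mul_lt_mul_of_le_of_lt hB.1 (hR.2 h) (by positivity)) (by positivity)

/-- For every integer `n > 1`, `Φ(n) < 6·n·n^{1/3}`. -/
theorem Phi_lt (n : ℕ) (hn : 1 < n) :
    (Phi n : ℝ) < 6 * (n : ℝ) * (n : ℝ) ^ ((1 : ℝ) / 3) := by
  have h2n : 0 < 2 * n := by omega
  have hne : {m : ℕ | 0 < m ∧ Nat.totient m ∣ 2 * n}.Nonempty :=
    ⟨1, Nat.one_pos, by simp⟩
  have hbdd : BddAbove {m : ℕ | 0 < m ∧ Nat.totient m ∣ 2 * n} := by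
    refine ⟨432 * n ^ 4, fun m hm => ?_⟩
    obtain ⟨hmpos, hdvd⟩ := hm
    have h1 := (key_ineq m hmpos).1
    have h2 : Nat.totient m ≤ 2 * n := Nat.le_of_dvd h2n hdvd
    have h3 : Nat.totient m ^ 4 ≤ (2*n) ^ 4 := Nat.pow_le_pow_left h2 4
    have h4 : m ≤ m ^ 3 := Nat.le_self_pow (by norm_num) m
    calc m ≤ m ^ 3 := h4
      _ ≤ 2 * m ^ 3 := by omega
      _ ≤ 27 * Nat.totient m ^ 4 := h1
      _ ≤ 27 * (2*n)^4 := Nat.mul_le_mul_left _ h3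
      _ = 432 * n ^ 4 := by ring
  have hmem : Phi n ∈ {m : ℕ | 0 < m ∧ Nat.totient m ∣ 2 * n} :=
    Nat.sSup_mem hne hbdd
  obtain ⟨hpos, hdvd⟩ := hmem
  have hone : (1:ℝ) ≤ (n:ℝ) := by exact_mod_cast hn.le
  have hcube : ((n:ℝ) ^ ((1:ℝ)/3)) ^ (3:ℕ) = (n:ℝ) := by
    rw [← Real.rpow_natCast ((n:ℝ) ^ ((1:ℝ)/3)) 3, ← Real.rpow_mul (by positivity)]
    norm_num
  by_cases h6 : Phi n = 6
  · rw [h6]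
    have hx : (1:ℝ) ≤ (n:ℝ) ^ ((1:ℝ)/3) := Real.one_le_rpow hone (by norm_num)
    have h2 : (2:ℝ) ≤ (n:ℝ) := by exact_mod_cast hn
    nlinarith
  · have h2 : Nat.totient (Phi n) ≤ 2 * n := Nat.le_of_dvd h2n hdvd
    have h3 := (key_ineq (Phi n) hpos).2 h6
    have h4 : 2 * (Phi n) ^ 3 < 27 * (2*n) ^ 4 :=
      h3.trans_le (Nat.mul_le_mul_left _ (Nat.pow_le_pow_left h2 4))
    have h5 : (Phi n) ^ 3 < 216 * n ^ 4 := by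
      have : 27 * (2*n)^4 = 432 * n ^ 4 := by ring
      omega
    have h5' : ((Phi n : ℝ)) ^ 3 < 216 * (n:ℝ) ^ 4 := by exact_mod_cast h5
    have hrhs : (6 * (n:ℝ) * (n:ℝ) ^ ((1:ℝ)/3)) ^ (3:ℕ) = 216 * (n:ℝ) ^ 4 := by
      rw [mul_pow, mul_pow, hcube]; ring
    have : ((Phi n : ℝ)) ^ (3:ℕ) < (6 * (n:ℝ) * (n:ℝ) ^ ((1:ℝ)/3)) ^ (3:ℕ) := by
      rw [hrhs]; exact_mod_cast h5'
    exact lt_of_pow_lt_pow_left₀ 3 (by positivity) this
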